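/- Let Σ = (X, Y, M(U), φ, h) be a linear control system with U ≠ {0} that is exponentially stable, robust with respect to the input, and strictly causal, and let V(T) := sup{ ‖h(φ(T,0,u))‖_Y : u ∈ M(U), sup_{0≤t≤T}‖u(t)‖_U = 1 } for T > 0. Then for every ε > 0 there exists a periodic input u_ε ∈ M(U) with sup_{s≥0}‖u_ε(s)‖_U = 1 such that limsup_{t→∞} ‖h(φ(t,0,u_ε))‖_Y ≥ sup_{T>0} V(T) − ε. -/

import Mathlib

open Filter

noncomputable section

/-- A linear control system `Σ = (X, Y, M(U), φ, h)` in the sense of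
Karafyllis, "On the Relation of IOS-Gains and Asymptotic Gains For Linear Systems".
Inputs are functions `u : ℝ → U`; only values on `[0, ∞)` are relevant. -/
structure LinearControlSystem (X Y U : Type*)
    [NormedAddCommGroup X] [NormedSpace ℝ X]
    [NormedAddCommGroup Y] [NormedSpace ℝ Y]
    [NormedAddCommGroup U] [NormedSpace ℝ U] where
  /-- the set `M(U)` of admissible inputs -/
  inputs : Set (ℝ → U)
  /-- the transition map `φ` -/
  trans : ℝ → X → (ℝ → U) → X
  /-- the continuous linear output map `h : X → Y` -/
  out : X →L[ℝ] Y
  /-- `U ≠ {0}` -/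
  U_nontrivial : ∃ v : U, v ≠ 0
  /-- inputs are locally bounded -/
  loc_bdd : ∀ u ∈ inputs, ∀ T : ℝ, BddAbove ((fun s => ‖u s‖) '' Set.Icc 0 T)
  zero_mem : (0 : ℝ → U) ∈ inputs
  add_mem : ∀ u₁ ∈ inputs, ∀ u₂ ∈ inputs, u₁ + u₂ ∈ inputs
  smul_mem : ∀ u ∈ inputs, ∀ c : ℝ, c • u ∈ inputs
  concat_le_mem : ∀ u₁ ∈ inputs, ∀ u₂ ∈ inputs, ∀ τ > (0 : ℝ),
    (fun t => if t ≤ τ then u₁ t else u₂ (t - τ)) ∈ inputs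
  concat_lt_mem : ∀ u₁ ∈ inputs, ∀ u₂ ∈ inputs, ∀ τ > (0 : ℝ),
    (fun t => if t < τ then u₁ t else u₂ (t - τ)) ∈ inputs
  /-- closure under the shift operator `δ_τ` -/
  shift_mem : ∀ u ∈ inputs, ∀ τ > (0 : ℝ), (fun t => u (t + τ)) ∈ inputs
  exists_input_val : ∀ v : U, ∃ u ∈ inputs, u 0 = v
  /-- closure under `T`-periodic extension -/
  periodic_ext_mem : ∀ u ∈ inputs, ∀ T > (0 : ℝ),
    (fun t => u (t - T * ⌊t / T⌋)) ∈ inputs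
  identity : ∀ x : X, ∀ u ∈ inputs, trans 0 x u = x
  causality : ∀ t ≥ (0 : ℝ), ∀ x : X, ∀ u ∈ inputs, ∀ v ∈ inputs,
    (∀ s, 0 ≤ s → s ≤ t → u s = v s) → trans t x u = trans t x v
  semigroup : ∀ x : X, ∀ u ∈ inputs, ∀ τ t : ℝ, 0 ≤ τ → τ ≤ t →
    trans t x u = trans (t - τ) (trans τ x u) (fun s => u (s + τ))
  linearity : ∀ t ≥ (0 : ℝ), ∀ x₁ x₂ : X, ∀ u₁ ∈ inputs, ∀ u₂ ∈ inputs, ∀ a b : ℝ,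
    trans t (a • x₁ + b • x₂) (a • u₁ + b • u₂) = a • trans t x₁ u₁ + b • trans t x₂ u₂

namespace LinearControlSystem

variable {X Y U : Type*}
    [NormedAddCommGroup X] [NormedSpace ℝ X]
    [NormedAddCommGroup Y] [NormedSpace ℝ Y]
    [NormedAddCommGroup U] [NormedSpace ℝ U]

/-- `sup_{0 ≤ s ≤ t} ‖u(s)‖`. -/
def runSup (u : ℝ → U) (t : ℝ) : ℝ :=
  sSup ((fun s => ‖u s‖) '' Set.Icc 0 t)

/-- `sup_{s ≥ 0} ‖u(s)‖`. -/
def supNorm (u : ℝ → U) : ℝ :=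
  sSup ((fun s => ‖u s‖) '' Set.Ici 0)

/-- exponential stability with the specific constants `M, σ > 0` -/
def IsES (sys : LinearControlSystem X Y U) (M σ : ℝ) : Prop :=
  0 < M ∧ 0 < σ ∧ ∀ x : X, ∀ t ≥ (0 : ℝ),
    ‖sys.trans t x 0‖ ≤ M * Real.exp (-σ * t) * ‖x‖

/-- exponential stability (ES) -/
def ES (sys : LinearControlSystem X Y U) : Prop :=
  ∃ M σ : ℝ, sys.IsES M σ

/-- robustness with respect to the input, with the specific nondecreasing function `b` -/
def IsRobust (sys : LinearControlSystem X Y U) (b : ℝ → ℝ) : Prop :=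
  MonotoneOn b (Set.Ici 0) ∧ (∀ t, 0 ≤ b t) ∧
    ∀ u ∈ sys.inputs, ∀ t ≥ (0 : ℝ), ‖sys.trans t 0 u‖ ≤ b t * runSup u t

/-- robustness with respect to the input -/
def Robust (sys : LinearControlSystem X Y U) : Prop :=
  ∃ b : ℝ → ℝ, sys.IsRobust b

/-- strict causality -/
def StrictlyCausal (sys : LinearControlSystem X Y U) : Prop :=
  ∀ t > (0 : ℝ), ∀ u ∈ sys.inputs, ∀ v ∈ sys.inputs,
    (∀ s, 0 ≤ s → s < t → u s = v s) → sys.trans t 0 u = sys.trans t 0 v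

/-- the minimum IOS-gain `γ` -/
def gain (sys : LinearControlSystem X Y U) : ℝ :=
  sSup {r | ∃ t ≥ (0 : ℝ), ∃ u ∈ sys.inputs, runSup u t = 1 ∧ r = ‖sys.out (sys.trans t 0 u)‖}

/-- the minimum output asymptotic gain `γ_as` -/
def asympGain (sys : LinearControlSystem X Y U) : ℝ :=
  sSup {r | ∃ u ∈ sys.inputs, supNorm u = 1 ∧
    r = limsup (fun t => ‖sys.out (sys.trans t 0 u)‖) atTop}

/-- the value `V(T)` of the optimal control problem (4.5) -/
def V (sys : LinearControlSystem X Y U) (T : ℝ) : ℝ :=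
  sSup {r | ∃ u ∈ sys.inputs, runSup u T = 1 ∧ r = ‖sys.out (sys.trans T 0 u)‖}

/-- periodic inputs -/
def Periodic (u : ℝ → U) : Prop :=
  ∃ T > (0 : ℝ), ∀ t ≥ (0 : ℝ), u (t + T) = u t

end LinearControlSystem

section Aux

open LinearControlSystem Pointwise

variable {X Y U : Type*}
    [NormedAddCommGroup X] [NormedSpace ℝ X]
    [NormedAddCommGroup Y] [NormedSpace ℝ Y]
    [NormedAddCommGroup U] [NormedSpace ℝ U]

lemma aux_fract (P : ℝ) (hP : 0 < P) (t : ℝ) :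
    0 ≤ t - P * ⌊t / P⌋ ∧ t - P * ⌊t / P⌋ < P := by
  have h1 : t - P * ⌊t / P⌋ = P * Int.fract (t / P) := by
    rw [Int.fract]
    field_simp
  constructor
  · rw [h1]; exact mul_nonneg hP.le (Int.fract_nonneg _)
  · rw [h1]
    calc P * Int.fract (t / P) < P * 1 :=
          mul_lt_mul_of_pos_left (Int.fract_lt_one _) hP
      _ = P := mul_one P

lemma aux_shift (P : ℝ) (hP : 0 < P) (t : ℝ) :
    (t + P) - P * ⌊(t + P) / P⌋ = t - P * ⌊t / P⌋ := by
  have h : (t + P) / P = t / P + 1 := by field_simp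
  rw [h, Int.floor_add_one]
  push_cast
  ring

lemma aux_small (P : ℝ) (hP : 0 < P) {t : ℝ} (h0 : 0 ≤ t) (h1 : t < P) :
    t - P * ⌊t / P⌋ = t := by
  have : ⌊t / P⌋ = 0 := by
    rw [Int.floor_eq_zero_iff]
    constructor
    · exact div_nonneg h0 hP.le
    · exact (div_lt_one hP).2 h1
  rw [this]
  simp

lemma aux_sSup_smul (c : ℝ) (hc : 0 ≤ c) (u : ℝ → U) (A : Set ℝ) :
    sSup ((fun s => ‖(c • u) s‖) '' A) = c * sSup ((fun s => ‖u s‖) '' A) := by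
  have h1 : ((fun s => ‖(c • u) s‖) '' A) = c • ((fun s => ‖u s‖) '' A) := by
    rw [← Set.image_smul, Set.image_image]
    apply Set.image_congr
    intro s _
    simp [norm_smul, Real.norm_eq_abs, abs_of_nonneg hc]
  rw [h1, Real.sSup_smul_of_nonneg hc, smul_eq_mul]

lemma aux_limsup_nonneg (f : ℝ → ℝ) (hf : ∀ t, 0 ≤ f t) :
    0 ≤ limsup f atTop := by
  rw [limsup_eq]
  rcases Set.eq_empty_or_nonempty {a | ∀ᶠ n in atTop, f n ≤ a} with h | h
  · rw [h, Real.sInf_empty]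
  · refine le_csInf h ?_
    intro a ha
    obtain ⟨t, ht⟩ := ha.exists
    exact (hf t).trans ht

lemma aux_decomp (sys : LinearControlSystem X Y U) {t : ℝ} (ht : 0 ≤ t) (x : X)
    {u : ℝ → U} (hu : u ∈ sys.inputs) :
    sys.trans t x u = sys.trans t x 0 + sys.trans t 0 u := by
  have h := sys.linearity t ht x 0 0 sys.zero_mem u hu 1 1
  simpa using h

lemma aux_trans_zero (sys : LinearControlSystem X Y U) {M σ : ℝ} (h : sys.IsES M σ)
    {t : ℝ} (ht : 0 ≤ t) : sys.trans t 0 0 = 0 := by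
  have h2 := h.2.2 0 t ht
  rw [norm_zero, mul_zero] at h2
  exact norm_le_zero_iff.1 h2

/-- the `P`-periodic extension of the input `ub` truncated (to zero) beyond time `T` -/
def pext (ub : ℝ → U) (T P : ℝ) : ℝ → U :=
  fun t => (fun s => if s < T then ub s else (0 : ℝ → U) (s - T)) (t - P * ⌊t / P⌋)

lemma pext_mem (sys : LinearControlSystem X Y U) {ub : ℝ → U} (hub : ub ∈ sys.inputs)
    {T P : ℝ} (hT : 0 < T) (hP : 0 < P) : pext ub T P ∈ sys.inputs :=
  sys.periodic_ext_mem _ (sys.concat_lt_mem ub hub 0 sys.zero_mem T hT) P hP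

lemma pext_per {ub : ℝ → U} {T P : ℝ} (hP : 0 < P) (t : ℝ) :
    pext ub T P (t + P) = pext ub T P t := by
  unfold pext
  rw [aux_shift P hP t]

lemma pext_eq {ub : ℝ → U} {T P : ℝ} (hP : 0 < P) {t : ℝ} (h0 : 0 ≤ t) (h1 : t < P) :
    pext ub T P t = if t < T then ub t else 0 := by
  unfold pext
  rw [aux_small P hP h0 h1]
  simp [Pi.zero_apply]

lemma pext_norm_le {ub : ℝ → U} {T P : ℝ} (hP : 0 < P)
    (hle : ∀ s, 0 ≤ s → s < T → ‖ub s‖ ≤ 1) (s : ℝ) : ‖pext ub T P s‖ ≤ 1 := by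
  obtain ⟨h0, h1⟩ := aux_fract P hP s
  unfold pext
  simp only
  split
  · exact hle _ h0 ‹_›
  · simp

lemma pext_supNorm {ub : ℝ → U} {T P : ℝ} (hT : 0 < T) (hTP : T < P)
    (hsup : sSup ((fun s => ‖ub s‖) '' Set.Ico 0 T) = 1) :
    supNorm (pext ub T P) = 1 := by
  have hP : 0 < P := hT.trans hTP
  have hbdd : BddAbove ((fun s => ‖ub s‖) '' Set.Ico 0 T) := by
    by_contra h
    rw [Real.sSup_of_not_bddAbove h] at hsup
    exact one_ne_zero hsup.symm
  have hA : ∀ s, 0 ≤ s → s < T → ‖ub s‖ ≤ 1 := by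
    intro s h0 h1
    rw [← hsup]
    exact le_csSup hbdd ⟨s, ⟨h0, h1⟩, rfl⟩
  have hle := pext_norm_le hP hA
  unfold supNorm
  apply le_antisymm
  · refine Real.sSup_le ?_ zero_le_one
    rintro r ⟨s, _, rfl⟩
    exact hle s
  · rw [← hsup]
    apply csSup_le_csSup
    · refine ⟨1, ?_⟩
      rintro r ⟨s, _, rfl⟩
      exact hle s
    · exact ⟨‖ub 0‖, 0, ⟨le_refl 0, hT⟩, rfl⟩
    · rintro r ⟨s, ⟨h0, h1⟩, rfl⟩
      refine ⟨s, h0, ?_⟩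
      show ‖pext ub T P s‖ = ‖ub s‖
      rw [pext_eq hP h0 (h1.trans hTP), if_pos h1]

lemma exists_runSup_one (sys : LinearControlSystem X Y U) (T : ℝ) (hT : 0 < T) :
    ∃ u ∈ sys.inputs, runSup u T = 1 := by
  obtain ⟨v, hv⟩ := sys.U_nontrivial
  obtain ⟨w, hw, hw0⟩ := sys.exists_input_val v
  have hbdd := sys.loc_bdd w hw T
  have hvc : ‖v‖ ≤ runSup w T := le_csSup hbdd ⟨0, ⟨le_refl 0, hT.le⟩, by simp [hw0]⟩
  have hc : 0 < runSup w T := lt_of_lt_of_le (norm_pos_iff.2 hv) hvc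
  refine ⟨(runSup w T)⁻¹ • w, sys.smul_mem w hw _, ?_⟩
  show sSup ((fun s => ‖((runSup w T)⁻¹ • w) s‖) '' Set.Icc 0 T) = 1
  rw [aux_sSup_smul _ (inv_nonneg.2 hc.le)]
  exact inv_mul_cancel₀ hc.ne'

lemma exists_periodic_unit (sys : LinearControlSystem X Y U) :
    ∃ u ∈ sys.inputs, Periodic u ∧ supNorm u = 1 := by
  obtain ⟨v, hv⟩ := sys.U_nontrivial
  obtain ⟨w, hw, hw0⟩ := sys.exists_input_val v
  have hbdd : BddAbove ((fun s => ‖w s‖) '' Set.Ico 0 1) :=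
    (sys.loc_bdd w hw 1).mono (Set.image_mono Set.Ico_subset_Icc_self)
  set c := sSup ((fun s => ‖w s‖) '' Set.Ico 0 1) with hc
  have hvc : ‖v‖ ≤ c := le_csSup hbdd ⟨0, ⟨le_refl 0, one_pos⟩, by simp [hw0]⟩
  have hcpos : 0 < c := lt_of_lt_of_le (norm_pos_iff.2 hv) hvc
  have hsup : sSup ((fun s => ‖(c⁻¹ • w) s‖) '' Set.Ico 0 1) = 1 := by
    rw [aux_sSup_smul _ (inv_nonneg.2 hcpos.le), ← hc]
    exact inv_mul_cancel₀ hcpos.ne'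
  refine ⟨pext (c⁻¹ • w) 1 2, pext_mem sys (sys.smul_mem w hw c⁻¹) one_pos two_pos,
    ⟨2, two_pos, fun t _ => pext_per two_pos t⟩, pext_supNorm one_pos one_lt_two hsup⟩

end Aux

set_option maxHeartbeats 1000000 in
open LinearControlSystem in
/-- The key step in the proof of Theorem 4.3: for every `ε > 0` there is a periodic input
`u_ε` with `sup_{s≥0}‖u_ε(s)‖ = 1` whose output limsup is at least `sup_{T>0} V(T) − ε`. -/
theorem statement_9 {X Y U : Type*}
    [NormedAddCommGroup X] [NormedSpace ℝ X]
    [NormedAddCommGroup Y] [NormedSpace ℝ Y]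
    [NormedAddCommGroup U] [NormedSpace ℝ U]
    (sys : LinearControlSystem X Y U)
    (hES : sys.ES) (hrob : sys.Robust) (hsc : sys.StrictlyCausal) :
    ∀ ε > (0 : ℝ), ∃ u ∈ sys.inputs, Periodic u ∧ supNorm u = 1 ∧
      limsup (fun t => ‖sys.out (sys.trans t 0 u)‖) atTop ≥
        sSup {r | ∃ T > (0 : ℝ), r = sys.V T} - ε := by
  obtain ⟨M, σ, hMES⟩ := hES
  obtain ⟨hM, hσ, hESb⟩ := hMES
  obtain ⟨b, hbmono, hbnn, hrobb⟩ := hrob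
  intro ε hε
  set S := sSup {r | ∃ T > (0 : ℝ), r = sys.V T} with hS
  -- trivial-case helper
  have htriv : S - ε ≤ 0 → ∃ u ∈ sys.inputs, Periodic u ∧ supNorm u = 1 ∧
      limsup (fun t => ‖sys.out (sys.trans t 0 u)‖) atTop ≥ S - ε := by
    intro hS'
    obtain ⟨u, hu, hper, hsn⟩ := exists_periodic_unit sys
    exact ⟨u, hu, hper, hsn,
      le_trans hS' (aux_limsup_nonneg _ (fun t => norm_nonneg _))⟩
  have hSne : {r | ∃ T > (0 : ℝ), r = sys.V T}.Nonempty := ⟨sys.V 1, 1, one_pos, rfl⟩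
  have hlt1 : S - ε / 2 < sSup {r | ∃ T > (0 : ℝ), r = sys.V T} := by
    rw [← hS]; exact sub_lt_self S (half_pos hε)
  obtain ⟨r₁, hr₁mem, hVT⟩ := exists_lt_of_lt_csSup hSne hlt1
  obtain ⟨T, hT, rfl⟩ := hr₁mem
  have hVset : {r | ∃ u ∈ sys.inputs, runSup u T = 1 ∧
      r = ‖sys.out (sys.trans T 0 u)‖}.Nonempty := by
    obtain ⟨u₀, hu₀, h1⟩ := exists_runSup_one sys T hT
    exact ⟨_, u₀, hu₀, h1, rfl⟩
  have hVeq : sys.V T = sSup {r | ∃ u ∈ sys.inputs, runSup u T = 1 ∧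
      r = ‖sys.out (sys.trans T 0 u)‖} := rfl
  have hlt2 : sys.V T - ε / 2 < sSup {r | ∃ u ∈ sys.inputs, runSup u T = 1 ∧
      r = ‖sys.out (sys.trans T 0 u)‖} := by
    rw [← hVeq]; exact sub_lt_self _ (half_pos hε)
  obtain ⟨r₂, hr₂mem, hγ⟩ := exists_lt_of_lt_csSup hVset hlt2
  obtain ⟨u, hu, hruns, rfl⟩ := hr₂mem
  have hγS : S - ε < ‖sys.out (sys.trans T 0 u)‖ := by linarith
  -- the sup of ‖u‖ over the half-open interval [0, T)
  set c := sSup ((fun s => ‖u s‖) '' Set.Ico 0 T) with hc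
  have hbddIco : BddAbove ((fun s => ‖u s‖) '' Set.Ico 0 T) :=
    (sys.loc_bdd u hu T).mono (Set.image_mono Set.Ico_subset_Icc_self)
  have hc0 : 0 ≤ c :=
    le_trans (norm_nonneg (u 0)) (le_csSup hbddIco ⟨0, ⟨le_refl 0, hT⟩, rfl⟩)
  rcases eq_or_lt_of_le hc0 with hczero | hcpos
  · -- degenerate case : `u = 0` on `[0, T)`, hence the target is nonpositive
    have hu0 : ∀ s, 0 ≤ s → s < T → u s = 0 := by
      intro s h0 h1
      have h2 : ‖u s‖ ≤ c := le_csSup hbddIco ⟨s, ⟨h0, h1⟩, rfl⟩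
      rw [← hczero] at h2
      exact norm_le_zero_iff.1 h2
    have h3 : sys.trans T 0 u = sys.trans T 0 0 :=
      hsc T hT u hu 0 sys.zero_mem (fun s h0 h1 => by rw [hu0 s h0 h1]; rfl)
    have h4 : sys.trans T 0 u = 0 :=
      h3.trans (aux_trans_zero sys ⟨hM, hσ, hESb⟩ hT.le)
    apply htriv
    rw [h4] at hγS
    simp only [map_zero, norm_zero] at hγS
    exact hγS.le
  · -- main case : `0 < c`
    have hc1 : c ≤ 1 := by
      rw [← hruns]
      exact csSup_le_csSup (sys.loc_bdd u hu T) ⟨‖u 0‖, 0, ⟨le_refl 0, hT⟩, rfl⟩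
        (Set.image_mono Set.Ico_subset_Icc_self)
    -- normalize so that the sup over the half-open interval is `1`
    set u' := c⁻¹ • u with hu'def
    have hu' : u' ∈ sys.inputs := sys.smul_mem u hu c⁻¹
    have hsup' : sSup ((fun s => ‖u' s‖) '' Set.Ico 0 T) = 1 := by
      rw [hu'def, aux_sSup_smul c⁻¹ (inv_nonneg.2 hc0), ← hc]
      exact inv_mul_cancel₀ hcpos.ne'
    have hg' : sys.trans T 0 u' = c⁻¹ • sys.trans T 0 u := by
      have h := sys.linearity T hT.le 0 0 u hu 0 sys.zero_mem c⁻¹ 0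
      rw [hu'def]
      simpa using h
    have hγ' : S - ε < ‖sys.out (sys.trans T 0 u')‖ := by
      have h1 : 1 ≤ c⁻¹ := (one_le_inv₀ hcpos).2 hc1
      rw [hg', map_smul, norm_smul, Real.norm_eq_abs, abs_of_nonneg (inv_nonneg.2 hc0)]
      have h2 := mul_le_mul_of_nonneg_right h1 (norm_nonneg (sys.out (sys.trans T 0 u)))
      rw [one_mul] at h2
      linarith
    have hδ : 0 < ‖sys.out (sys.trans T 0 u')‖ - (S - ε) := sub_pos.2 hγ'
    -- choose the waiting time τ
    set D := ‖sys.out‖ * (M * (2 * b T)) with hD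
    have hexp : Tendsto (fun τ : ℝ => M * Real.exp (-σ * τ)) atTop (nhds 0) := by
      have h1 : Tendsto (fun τ : ℝ => σ * τ) atTop atTop :=
        Tendsto.const_mul_atTop hσ tendsto_id
      have h2 : Tendsto (fun τ : ℝ => Real.exp (-(σ * τ))) atTop (nhds 0) :=
        Real.tendsto_exp_neg_atTop_nhds_zero.comp h1
      have h3 : Tendsto (fun τ : ℝ => M * Real.exp (-(σ * τ))) atTop (nhds (M * 0)) :=
        tendsto_const_nhds.mul h2
      rw [mul_zero] at h3
      exact h3.congr (fun τ => by rw [neg_mul])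
    have hq2 : Tendsto (fun τ : ℝ => D * (M * Real.exp (-σ * τ))) atTop (nhds 0) := by
      have h3 : Tendsto (fun τ : ℝ => D * (M * Real.exp (-σ * τ))) atTop (nhds (D * 0)) :=
        tendsto_const_nhds.mul hexp
      rwa [mul_zero] at h3
    have hq3 : Tendsto (fun τ : ℝ => M * Real.exp (-σ * τ) * M) atTop (nhds 0) := by
      have h3 : Tendsto (fun τ : ℝ => M * Real.exp (-σ * τ) * M) atTop (nhds (0 * M)) :=
        hexp.mul tendsto_const_nhds
      rwa [zero_mul] at h3
    obtain ⟨τ, hτmain, hτ1⟩ :=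
      (((hq2.eventually_lt_const hδ).and (hq3.eventually_lt_const one_half_pos)).and
        (eventually_ge_atTop (1 : ℝ))).exists
    obtain ⟨hτδ, hτhalf⟩ := hτmain
    have hτ0 : 0 < τ := lt_of_lt_of_le one_pos hτ1
    set q := M * Real.exp (-σ * τ) with hqdef
    have hq0 : 0 ≤ q := mul_nonneg hM.le (Real.exp_nonneg _)
    set P := T + τ with hPdef
    have hTP : T < P := by rw [hPdef]; linarith
    have hP : 0 < P := hT.trans hTP
    have hP1 : 1 ≤ P := by rw [hPdef]; linarith
    -- the periodic input
    set uε := pext u' T P with huεdef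
    have huεmem : uε ∈ sys.inputs := pext_mem sys hu' hT hP
    have hper : ∀ t : ℝ, uε (t + P) = uε t := fun t => pext_per hP t
    have hperk : ∀ k : ℕ, ∀ t : ℝ, uε (t + k * P) = uε t := by
      intro k
      induction k with
      | zero => intro t; simp
      | succ n ih =>
        intro t
        have h1 : t + ((n + 1 : ℕ) : ℝ) * P = (t + n * P) + P := by push_cast; ring
        rw [h1, hper, ih]
    have heq : ∀ t : ℝ, 0 ≤ t → t < P → uε t = if t < T then u' t else 0 :=
      fun t h0 h1 => pext_eq hP h0 h1
    have hbdd' : BddAbove ((fun s => ‖u' s‖) '' Set.Ico 0 T) :=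
      (sys.loc_bdd u' hu' T).mono (Set.image_mono Set.Ico_subset_Icc_self)
    have hA : ∀ s, 0 ≤ s → s < T → ‖u' s‖ ≤ 1 := by
      intro s h0 h1
      rw [← hsup']
      exact le_csSup hbdd' ⟨s, ⟨h0, h1⟩, rfl⟩
    have hle1 : ∀ s, ‖uε s‖ ≤ 1 := pext_norm_le hP hA
    have hsn : supNorm uε = 1 := pext_supNorm hT hTP hsup'
    have hrun1 : ∀ t : ℝ, runSup uε t ≤ 1 := fun t =>
      Real.sSup_le (by rintro r ⟨s, _, rfl⟩; exact hle1 s) zero_le_one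
    have hkey : sys.trans T 0 uε = sys.trans T 0 u' := by
      refine hsc T hT uε huεmem u' hu' (fun s h0 h1 => ?_)
      rw [heq s h0 (h1.trans hTP), if_pos h1]
    -- the states at the start of each period
    set x : ℕ → X := fun k => sys.trans (k * P) 0 uε with hx
    have hx0 : x 0 = 0 := by
      show sys.trans (((0 : ℕ) : ℝ) * P) 0 uε = 0
      rw [Nat.cast_zero, zero_mul]
      exact sys.identity 0 uε huεmem
    have hzc : ∀ k : ℕ, sys.trans ((k : ℝ) * P + T) 0 uε
        = sys.trans T (x k) 0 + sys.trans T 0 u' := by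
      intro k
      have hkP : (0 : ℝ) ≤ (k : ℝ) * P := mul_nonneg (Nat.cast_nonneg k) hP.le
      have hsg := sys.semigroup 0 uε huεmem ((k : ℝ) * P) ((k : ℝ) * P + T) hkP
        (le_add_of_nonneg_right hT.le)
      have h1 : (k : ℝ) * P + T - (k : ℝ) * P = T := by ring
      have h2 : (fun s => uε (s + (k : ℝ) * P)) = uε := funext fun s => hperk k s
      rw [h1, h2] at hsg
      rw [hsg, aux_decomp sys hT.le _ huεmem, hkey]
    have hxrec : ∀ k : ℕ,
        x (k + 1) = sys.trans τ (sys.trans T (x k) 0 + sys.trans T 0 u') 0 := by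
      intro k
      have hkP : (0 : ℝ) ≤ (k : ℝ) * P := mul_nonneg (Nat.cast_nonneg k) hP.le
      have hle : (k : ℝ) * P + T ≤ ((k + 1 : ℕ) : ℝ) * P := by
        push_cast
        nlinarith [hTP]
      have hsg := sys.semigroup 0 uε huεmem ((k : ℝ) * P + T) (((k + 1 : ℕ) : ℝ) * P)
        (add_nonneg hkP hT.le) hle
      have h1 : ((k + 1 : ℕ) : ℝ) * P - ((k : ℝ) * P + T) = τ := by
        push_cast
        rw [hPdef]
        ring
      have h2 : (fun s => uε (s + ((k : ℝ) * P + T))) = fun s => uε (s + T) :=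
        funext fun s => by
          rw [show s + ((k : ℝ) * P + T) = (s + T) + (k : ℝ) * P by ring, hperk k]
      rw [h1, h2] at hsg
      have hv : (fun s => uε (s + T)) ∈ sys.inputs := sys.shift_mem uε huεmem T hT
      have hv0 : sys.trans τ 0 (fun s => uε (s + T)) = 0 := by
        have hagree : ∀ s, 0 ≤ s → s < τ → uε (s + T) = (0 : ℝ → U) s := by
          intro s h0 h1
          have hsP : s + T < P := by rw [hPdef]; linarith
          rw [heq (s + T) (by linarith) hsP, if_neg (not_lt.2 (le_add_of_nonneg_left h0))]
          rfl
        rw [hsc τ hτ0 _ hv 0 sys.zero_mem hagree]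
        exact aux_trans_zero sys ⟨hM, hσ, hESb⟩ hτ0.le
      show sys.trans (((k + 1 : ℕ) : ℝ) * P) 0 uε = _
      rw [hsg, aux_decomp sys hτ0.le _ hv, hv0, add_zero, hzc k]
    -- uniform bound on the periodic states
    have hG : ‖sys.trans T 0 u'‖ ≤ b T := by
      rw [← hkey]
      refine le_trans (hrobb uε huεmem T hT.le) ?_
      exact mul_le_of_le_one_right (hbnn T) (hrun1 T)
    have hGnn : 0 ≤ b T := hbnn T
    have hexp1 : ∀ t : ℝ, 0 ≤ t → M * Real.exp (-σ * t) ≤ M := by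
      intro t ht
      have h0 : -σ * t ≤ 0 := by
        have h0' := mul_nonneg hσ.le ht
        linarith
      exact mul_le_of_le_one_right hM.le (Real.exp_le_one_iff.2 h0)
    have hxb : ∀ k : ℕ, ‖x k‖ ≤ 2 * q * b T := by
      intro k
      induction k with
      | zero => rw [hx0, norm_zero]; positivity
      | succ n ih =>
        rw [hxrec n]
        have h1 : ‖sys.trans T (x n) 0 + sys.trans T 0 u'‖ ≤ M * ‖x n‖ + b T := by
          refine le_trans (norm_add_le _ _) (add_le_add ?_ hG)
          refine le_trans (hESb (x n) T hT.le) ?_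
          exact mul_le_mul_of_nonneg_right (hexp1 T hT.le) (norm_nonneg _)
        have h2 := hESb (sys.trans T (x n) 0 + sys.trans T 0 u') τ hτ0.le
        rw [← hqdef] at h2
        have e1 : q * M * ‖x n‖ ≤ q * M * (2 * q * b T) :=
          mul_le_mul_of_nonneg_left ih (mul_nonneg hq0 hM.le)
        have e2 : q * M * (2 * q * b T) ≤ (1 / 2) * (2 * q * b T) :=
          mul_le_mul_of_nonneg_right hτhalf.le (by positivity)
        have h4 : ‖sys.trans τ (sys.trans T (x n) 0 + sys.trans T 0 u') 0‖
            ≤ q * (M * ‖x n‖ + b T) :=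
          le_trans h2 (mul_le_mul_of_nonneg_left h1 hq0)
        nlinarith [e1, e2, mul_nonneg hq0 hGnn]
    -- the output is frequently large
    have hfreq : ∀ k : ℕ, S - ε ≤ ‖sys.out (sys.trans ((k : ℝ) * P + T) 0 uε)‖ := by
      intro k
      rw [hzc k, map_add]
      have h1 : ‖sys.out (sys.trans T (x k) 0)‖ ≤ D * q := by
        refine le_trans (sys.out.le_opNorm _) ?_
        have h2 : ‖sys.trans T (x k) 0‖ ≤ M * (2 * q * b T) := by
          refine le_trans (hESb (x k) T hT.le) ?_
          exact mul_le_mul (hexp1 T hT.le) (hxb k) (norm_nonneg _) hM.le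
        calc ‖sys.out‖ * ‖sys.trans T (x k) 0‖
            ≤ ‖sys.out‖ * (M * (2 * q * b T)) :=
              mul_le_mul_of_nonneg_left h2 (norm_nonneg _)
          _ = D * q := by rw [hD]; ring
      have h3 : ‖sys.out (sys.trans T 0 u')‖
          ≤ ‖sys.out (sys.trans T (x k) 0) + sys.out (sys.trans T 0 u')‖
            + ‖sys.out (sys.trans T (x k) 0)‖ := by
        have h4 := norm_sub_le
          (sys.out (sys.trans T (x k) 0) + sys.out (sys.trans T 0 u'))
          (sys.out (sys.trans T (x k) 0))
        rw [add_sub_cancel_left] at h4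
        linarith
      linarith [hτδ, hγ', h1, h3]
    -- the output is (eventually) bounded
    have hbound : ∀ᶠ t : ℝ in atTop,
        ‖sys.out (sys.trans t 0 uε)‖ ≤ ‖sys.out‖ * (M * (2 * q * b T) + b P) := by
      filter_upwards [eventually_ge_atTop (0 : ℝ)] with t ht
      set k : ℕ := ⌊t / P⌋.toNat with hk
      have hfl : (0 : ℤ) ≤ ⌊t / P⌋ := Int.floor_nonneg.2 (div_nonneg ht hP.le)
      have hkc : ((k : ℕ) : ℝ) = ((⌊t / P⌋ : ℤ) : ℝ) := by
        rw [hk]; exact_mod_cast congrArg (fun n : ℤ => (n : ℝ)) (Int.toNat_of_nonneg hfl)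
      obtain ⟨hr0, hr1⟩ := aux_fract P hP t
      have hr0' : (k : ℝ) * P ≤ t := by rw [hkc, mul_comm]; linarith
      have hrr0 : 0 ≤ t - (k : ℝ) * P := by linarith
      have hrrP : t - (k : ℝ) * P ≤ P := by rw [hkc, mul_comm]; linarith
      have hsg := sys.semigroup 0 uε huεmem ((k : ℝ) * P) t
        (mul_nonneg (Nat.cast_nonneg k) hP.le) hr0'
      have h2 : (fun s => uε (s + (k : ℝ) * P)) = uε := funext fun s => hperk k s
      rw [h2] at hsg
      rw [hsg, aux_decomp sys hrr0 _ huεmem]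
      have hA1 : ‖sys.trans (t - (k : ℝ) * P) (sys.trans ((k : ℝ) * P) 0 uε) 0‖
          ≤ M * (2 * q * b T) := by
        refine le_trans (hESb _ _ hrr0) ?_
        have h6 : ‖sys.trans ((k : ℝ) * P) 0 uε‖ ≤ 2 * q * b T := hxb k
        exact mul_le_mul (hexp1 _ hrr0) h6 (norm_nonneg _) hM.le
      have hA2 : ‖sys.trans (t - (k : ℝ) * P) 0 uε‖ ≤ b P := by
        refine le_trans (hrobb uε huεmem _ hrr0) ?_
        have h7 : b (t - (k : ℝ) * P) ≤ b P :=
          hbmono (Set.mem_Ici.2 hrr0) (Set.mem_Ici.2 hP.le) hrrP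
        calc b (t - (k : ℝ) * P) * runSup uε (t - (k : ℝ) * P)
            ≤ b (t - (k : ℝ) * P) * 1 :=
              mul_le_mul_of_nonneg_left (hrun1 _) (hbnn _)
          _ = b (t - (k : ℝ) * P) := mul_one _
          _ ≤ b P := h7
      refine le_trans (sys.out.le_opNorm _) ?_
      refine mul_le_mul_of_nonneg_left ?_ (norm_nonneg _)
      exact le_trans (norm_add_le _ _) (add_le_add hA1 hA2)
    -- conclusion
    refine ⟨uε, huεmem, ⟨P, hP, fun t _ => hper t⟩, hsn, ?_⟩
    refine le_limsup_of_frequently_le ?_ (isBoundedUnder_of_eventually_le hbound)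
    rw [frequently_atTop]
    intro a
    refine ⟨(⌈a⌉₊ : ℝ) * P + T, ?_, hfreq ⌈a⌉₊⟩
    have h1 : a ≤ (⌈a⌉₊ : ℝ) := Nat.le_ceil a
    have h2 : (⌈a⌉₊ : ℝ) ≤ (⌈a⌉₊ : ℝ) * P :=
      le_mul_of_one_le_right (Nat.cast_nonneg _) hP1
    linarith
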